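/- For every n ≥ 1, Σ_{t=1}^{n} S_n(t) = 2 − 1/n, where S_n(t) := Σ_{k=1}^{t} A(n,k)/n!. -/

import Mathlib

open Finset Filter

/-- Sequence A000255: A(0)=A(1)=1, A(n)=n·A(n-1)+(n-1)·A(n-2). -/
def A : ℕ → ℕ
  | 0 => 1
  | 1 => 1
  | n + 2 => (n + 2) * A (n + 1) + (n + 1) * A n

/-- A(n,k) := C(n-1,k-1)·A(k-1). -/
def Ank (n k : ℕ) : ℕ := Nat.choose (n - 1) (k - 1) * A (k - 1)

lemma A_eq_der (n : ℕ) :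
    A n = numDerangements n + numDerangements (n + 1) := by
  induction n using Nat.twoStepInduction with
  | zero => decide
  | one => decide
  | more n ih1 ih2 =>
    show (n + 2) * A (n + 1) + (n + 1) * A n
      = numDerangements (n + 2) + numDerangements (n + 2 + 1)
    have e1 : numDerangements (n + 2) = (n + 1) * (numDerangements n + numDerangements (n + 1)) :=
      numDerangements_add_two n
    have e2 : numDerangements (n + 2 + 1)
        = (n + 2) * (numDerangements (n + 1) + numDerangements (n + 2)) :=
      numDerangements_add_two (n + 1)
    rw [ih1, ih2, e2, e1]
    ring

lemma sumST (m : ℕ) :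
    (∑ j ∈ range (m + 1), (Nat.choose m j * numDerangements j : ℤ)) = m.factorial ∧
      (∑ j ∈ range (m + 1), (Nat.choose m j * numDerangements (j + 1) : ℤ)) =
        (m + 1).factorial - m.factorial := by
  induction m with
  | zero => simp
  | succ m ih =>
    obtain ⟨hS, hT⟩ := ih
    have hS' : (∑ j ∈ range (m + 2), (Nat.choose (m + 1) j * numDerangements j : ℤ)) =
        (m + 1).factorial := by
      rw [Finset.sum_range_succ']
      have h1 : ∀ i ∈ range (m + 1),
          (Nat.choose (m + 1) (i + 1) * numDerangements (i + 1) : ℤ) =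
            (Nat.choose m i * numDerangements (i + 1) : ℤ)
              + (Nat.choose m (i + 1) * numDerangements (i + 1) : ℤ) := by
        intro i _
        rw [Nat.choose_succ_succ]
        push_cast
        ring
      rw [Finset.sum_congr rfl h1, Finset.sum_add_distrib, hT]
      have h2 : (∑ i ∈ range (m + 1), (Nat.choose m (i + 1) * numDerangements (i + 1) : ℤ))
          + (Nat.choose m 0 * numDerangements 0 : ℤ)
          = ∑ j ∈ range (m + 2), (Nat.choose m j * numDerangements j : ℤ) :=
        (Finset.sum_range_succ'
          (fun j => (Nat.choose m j * numDerangements j : ℤ)) (m + 1)).symm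
      have h3 : (∑ j ∈ range (m + 2), (Nat.choose m j * numDerangements j : ℤ))
          = m.factorial := by
        rw [Finset.sum_range_succ, Nat.choose_succ_self, hS]
        simp
      have h4 : (Nat.choose m 0 * numDerangements 0 : ℤ) = 1 := by simp
      have h5 : (∑ i ∈ range (m + 1), (Nat.choose m (i + 1) * numDerangements (i + 1) : ℤ))
          = m.factorial - 1 := by linarith [h2, h3, h4]
      rw [h5]
      have h6 : (Nat.choose (m + 1) 0 * numDerangements 0 : ℤ) = 1 := by simp
      rw [h6]
      push_cast [Nat.factorial_succ]
      ring
    refine ⟨hS', ?_⟩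
    have hX : (∑ j ∈ range (m + 2), ((j : ℤ) * Nat.choose (m + 1) j * numDerangements j))
        = (m + 1) * ((m + 1).factorial - m.factorial) := by
      rw [Finset.sum_range_succ'
        (fun j => ((j : ℤ) * Nat.choose (m + 1) j * numDerangements j)) (m + 1)]
      have h1 : ∀ i ∈ range (m + 1),
          (((i + 1 : ℕ) : ℤ) * Nat.choose (m + 1) (i + 1) * numDerangements (i + 1))
            = (m + 1) * (Nat.choose m i * numDerangements (i + 1) : ℤ) := by
        intro i _
        have := Nat.add_one_mul_choose_eq m i
        have h2 : ((m + 1) * Nat.choose m i : ℤ) = (Nat.choose (m + 1) (i + 1) * (i + 1) : ℤ) := by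
          exact_mod_cast congrArg (Nat.cast : ℕ → ℤ) this
        push_cast
        push_cast at h2
        nlinarith [h2]
      rw [Finset.sum_congr rfl h1, ← Finset.mul_sum, hT]
      simp
    have halt : (∑ j ∈ range (m + 2), ((-1 : ℤ) ^ j * Nat.choose (m + 1) j)) = 0 :=
      Int.alternating_sum_range_choose_of_ne (Nat.succ_ne_zero m)
    have h7 : ∀ j ∈ range (m + 2),
        (Nat.choose (m + 1) j * numDerangements (j + 1) : ℤ)
          = (j : ℤ) * Nat.choose (m + 1) j * numDerangements j
            + Nat.choose (m + 1) j * numDerangements j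
            - (-1 : ℤ) ^ j * Nat.choose (m + 1) j := by
      intro j _
      rw [mul_comm ((Nat.choose (m + 1) j : ℤ)) _, numDerangements_succ]
      ring
    rw [Finset.sum_congr rfl h7]
    rw [Finset.sum_sub_distrib, Finset.sum_add_distrib, hX, hS', halt]
    push_cast [Nat.factorial_succ]
    ring

lemma B_eq (m : ℕ) : ∑ j ∈ range (m + 1), Nat.choose m j * A j = (m + 1).factorial := by
  have h : (∑ j ∈ range (m + 1), (Nat.choose m j * A j : ℤ)) = ((m + 1).factorial : ℤ) := by
    have h1 : ∀ j ∈ range (m + 1), (Nat.choose m j * A j : ℤ)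
        = (Nat.choose m j * numDerangements j : ℤ)
          + (Nat.choose m j * numDerangements (j + 1) : ℤ) := by
      intro j _
      rw [A_eq_der]
      push_cast
      ring
    rw [Finset.sum_congr rfl h1, Finset.sum_add_distrib, (sumST m).1, (sumST m).2]
    ring
  exact_mod_cast h

lemma key (m : ℕ) :
    ∑ j ∈ range (m + 1), (m + 1 - j) * (Nat.choose m j * A j)
      = (m + 1).factorial + m * m.factorial := by
  induction m with
  | zero => decide
  | succ m _ =>
    have h1 : ∀ j ∈ range (m + 2),
        (m + 2 - j) * (Nat.choose (m + 1) j * A j)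
          = (m + 1) * (Nat.choose m j * A j) + Nat.choose (m + 1) j * A j := by
      intro j hj
      have hjm : j ≤ m + 1 := by simpa [Nat.lt_succ_iff] using hj
      have h2 : Nat.choose m j * (m + 1) = Nat.choose (m + 1) j * (m + 1 - j) :=
        Nat.choose_mul_succ_eq m j
      have h3 : m + 2 - j = (m + 1 - j) + 1 := by omega
      rw [h3]
      calc ((m + 1 - j) + 1) * (Nat.choose (m + 1) j * A j)
          = (Nat.choose (m + 1) j * (m + 1 - j)) * A j + Nat.choose (m + 1) j * A j := by ring
        _ = (m + 1) * (Nat.choose m j * A j) + Nat.choose (m + 1) j * A j := by rw [← h2]; ring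
    rw [Finset.sum_congr rfl h1, Finset.sum_add_distrib, ← Finset.mul_sum, B_eq]
    have h4 : ∑ j ∈ range (m + 2), Nat.choose m j * A j = (m + 1).factorial := by
      rw [Finset.sum_range_succ, Nat.choose_succ_self, B_eq]
      simp
    rw [h4, Nat.factorial_succ]
    ring

lemma numerator (m : ℕ) :
    ∑ k ∈ Icc 1 (m + 1), (m + 2 - k) * Ank (m + 1) k
      = (m + 1).factorial + m * m.factorial := by
  have h : Icc 1 (m + 1) = Ico 1 (m + 2) := rfl
  rw [h, Finset.sum_Ico_eq_sum_range]
  have h1 : ∀ i ∈ range (m + 2 - 1),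
      (m + 2 - (1 + i)) * Ank (m + 1) (1 + i) = (m + 1 - i) * (Nat.choose m i * A i) := by
    intro i _
    have : Ank (m + 1) (1 + i) = Nat.choose m i * A i := by
      simp [Ank, Nat.add_sub_cancel_left]
    rw [this]
    congr 1
    omega
  rw [Finset.sum_congr rfl h1]
  exact key m

theorem stmt12 (n : ℕ) (hn : 1 ≤ n) :
    ∑ t ∈ Finset.Icc 1 n,
        (∑ k ∈ Finset.Icc 1 t, (Ank n k : ℝ) / (Nat.factorial n)) =
      2 - 1 / n := by
  obtain ⟨m, rfl⟩ : ∃ m, n = m + 1 := ⟨n - 1, by omega⟩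
  have hswap : ∑ t ∈ Finset.Icc 1 (m + 1),
      ∑ k ∈ Finset.Icc 1 t, (Ank (m + 1) k : ℝ) / ((m + 1).factorial)
      = ∑ k ∈ Finset.Icc 1 (m + 1),
          ∑ t ∈ Finset.Icc k (m + 1), (Ank (m + 1) k : ℝ) / ((m + 1).factorial) := by
    refine Finset.sum_comm' ?_
    intro t k
    simp only [Finset.mem_Icc]
    omega
  rw [hswap]
  have hinner : ∀ k ∈ Finset.Icc 1 (m + 1),
      (∑ t ∈ Finset.Icc k (m + 1), (Ank (m + 1) k : ℝ) / ((m + 1).factorial))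
        = (((m + 2 - k) * Ank (m + 1) k : ℕ) : ℝ) / ((m + 1).factorial) := by
    intro k _
    rw [Finset.sum_const, Nat.card_Icc]
    push_cast
    rw [nsmul_eq_mul]
    ring
  rw [Finset.sum_congr rfl hinner, ← Finset.sum_div, ← Nat.cast_sum, numerator]
  have hfac : ((m + 1).factorial : ℝ) ≠ 0 := by positivity
  have hm1 : ((m : ℝ) + 1) ≠ 0 := by positivity
  push_cast [Nat.factorial_succ]
  field_simp
  ring
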